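/- For all pairwise orthogonal octonions u, v, w, the identity -(w̄ v) ū = (ū v) w̄ holds, where the bar denotes octonionic conjugation. -/

import Mathlib

open scoped RealInnerProductSpace

set_option maxHeartbeats 4000000

noncomputable section

abbrev Oct : Type := EuclideanSpace ℝ (Fin 8)

def octe (i : Fin 8) : Oct := EuclideanSpace.single i 1

def plusTriples : List (Fin 8 × Fin 8 × Fin 8) :=
  [(1,2,3),(1,4,5),(1,7,6),(2,4,6),(2,5,7),(3,4,7),(3,6,5)]

/-- Completely skew-symmetric structure tensor taking the value `+1` on the
triples 123, 145, 176, 246, 257, 347, 365. -/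
def eps (i j k : Fin 8) : ℝ :=
  if plusTriples.any (fun t => decide ((i,j,k) = t ∨ (i,j,k) = (t.2.1, t.2.2, t.1) ∨
      (i,j,k) = (t.2.2, t.1, t.2.1))) then 1
  else if plusTriples.any (fun t => decide ((i,j,k) = (t.1, t.2.2, t.2.1) ∨
      (i,j,k) = (t.2.2, t.2.1, t.1) ∨ (i,j,k) = (t.2.1, t.1, t.2.2))) then -1
  else 0

/-- Structure constants of octonion multiplication:
`e_0 e_i = e_i e_0 = e_i` and `e_i e_j = -δ_ij e_0 + ε_ijk e_k` for `i,j ≥ 1`. -/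
def structC (i j k : Fin 8) : ℝ :=
  if i = 0 then (if j = k then 1 else 0)
  else if j = 0 then (if i = k then 1 else 0)
  else (if i = j ∧ k = 0 then (-1:ℝ) else 0) + eps i j k

/-- Octonion multiplication on ℝ⁸. -/
def octMul (x y : Oct) : Oct := WithLp.toLp 2 (fun k => ∑ i, ∑ j, x i * y j * structC i j k)

/-- Octonionic conjugation. -/
def octConj (x : Oct) : Oct := WithLp.toLp 2 (fun k => if k = 0 then x 0 else -(x k))

/-- The triple cross product `X(u,v,w) = -u(v̄w) + ⟨u,v⟩w + ⟨v,w⟩u - ⟨w,u⟩v`. -/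
def X3 (u v w : Oct) : Oct :=
  -octMul u (octMul (octConj v) w) + ⟪u, v⟫ • w + ⟪v, w⟫ • u - ⟪w, u⟫ • v

/-- The double cross product `u × v = uv + ⟨u,v⟩ e_0` (on imaginary octonions). -/
def cross2 (u v : Oct) : Oct := octMul u v + ⟪u, v⟫ • octe 0
lemma octMul_apply0 (x y : Oct) : octMul x y 0 = x 0 * y 0 - x 1 * y 1 - x 2 * y 2 - x 3 * y 3 - x 4 * y 4 - x 5 * y 5 - x 6 * y 6 - x 7 * y 7 := by
  simp only [octMul, WithLp.ofLp_toLp, Fin.sum_univ_eight, structC, eps, plusTriples]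
  simp (config := { decide := true }) only [List.any_cons, List.any_nil, if_true,
    if_false, ite_true, ite_false]
  ring

lemma octMul_apply1 (x y : Oct) : octMul x y 1 = x 0 * y 1 + x 1 * y 0 + x 2 * y 3 - x 3 * y 2 + x 4 * y 5 - x 5 * y 4 - x 6 * y 7 + x 7 * y 6 := by
  simp only [octMul, WithLp.ofLp_toLp, Fin.sum_univ_eight, structC, eps, plusTriples]
  simp (config := { decide := true }) only [List.any_cons, List.any_nil, if_true,
    if_false, ite_true, ite_false]
  ring

lemma octMul_apply2 (x y : Oct) : octMul x y 2 = x 0 * y 2 - x 1 * y 3 + x 2 * y 0 + x 3 * y 1 + x 4 * y 6 + x 5 * y 7 - x 6 * y 4 - x 7 * y 5 := by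
  simp only [octMul, WithLp.ofLp_toLp, Fin.sum_univ_eight, structC, eps, plusTriples]
  simp (config := { decide := true }) only [List.any_cons, List.any_nil, if_true,
    if_false, ite_true, ite_false]
  ring

lemma octMul_apply3 (x y : Oct) : octMul x y 3 = x 0 * y 3 + x 1 * y 2 - x 2 * y 1 + x 3 * y 0 + x 4 * y 7 - x 5 * y 6 + x 6 * y 5 - x 7 * y 4 := by
  simp only [octMul, WithLp.ofLp_toLp, Fin.sum_univ_eight, structC, eps, plusTriples]
  simp (config := { decide := true }) only [List.any_cons, List.any_nil, if_true,
    if_false, ite_true, ite_false]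
  ring

lemma octMul_apply4 (x y : Oct) : octMul x y 4 = x 0 * y 4 - x 1 * y 5 - x 2 * y 6 - x 3 * y 7 + x 4 * y 0 + x 5 * y 1 + x 6 * y 2 + x 7 * y 3 := by
  simp only [octMul, WithLp.ofLp_toLp, Fin.sum_univ_eight, structC, eps, plusTriples]
  simp (config := { decide := true }) only [List.any_cons, List.any_nil, if_true,
    if_false, ite_true, ite_false]
  ring

lemma octMul_apply5 (x y : Oct) : octMul x y 5 = x 0 * y 5 + x 1 * y 4 - x 2 * y 7 + x 3 * y 6 - x 4 * y 1 + x 5 * y 0 - x 6 * y 3 + x 7 * y 2 := by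
  simp only [octMul, WithLp.ofLp_toLp, Fin.sum_univ_eight, structC, eps, plusTriples]
  simp (config := { decide := true }) only [List.any_cons, List.any_nil, if_true,
    if_false, ite_true, ite_false]
  ring

lemma octMul_apply6 (x y : Oct) : octMul x y 6 = x 0 * y 6 + x 1 * y 7 + x 2 * y 4 - x 3 * y 5 - x 4 * y 2 + x 5 * y 3 + x 6 * y 0 - x 7 * y 1 := by
  simp only [octMul, WithLp.ofLp_toLp, Fin.sum_univ_eight, structC, eps, plusTriples]
  simp (config := { decide := true }) only [List.any_cons, List.any_nil, if_true,
    if_false, ite_true, ite_false]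
  ring

lemma octMul_apply7 (x y : Oct) : octMul x y 7 = x 0 * y 7 - x 1 * y 6 + x 2 * y 5 + x 3 * y 4 - x 4 * y 3 - x 5 * y 2 + x 6 * y 1 + x 7 * y 0 := by
  simp only [octMul, WithLp.ofLp_toLp, Fin.sum_univ_eight, structC, eps, plusTriples]
  simp (config := { decide := true }) only [List.any_cons, List.any_nil, if_true,
    if_false, ite_true, ite_false]
  ring

lemma octConj_apply (x : Oct) (k : Fin 8) : octConj x k = if k = 0 then x 0 else -(x k) := rfl

lemma inner_eq (x y : Oct) : ⟪x, y⟫ = x 0 * y 0 + x 1 * y 1 + x 2 * y 2 + x 3 * y 3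
    + x 4 * y 4 + x 5 * y 5 + x 6 * y 6 + x 7 * y 7 := by
  simp [PiLp.inner_apply, Fin.sum_univ_eight, mul_comm]

theorem stmt3 (u v w : Oct)
    (huv : ⟪u, v⟫ = 0) (huw : ⟪u, w⟫ = 0) (hvw : ⟪v, w⟫ = 0) :
    -octMul (octMul (octConj w) v) (octConj u)
      = octMul (octMul (octConj u) v) (octConj w) := by
  rw [inner_eq] at huv huw hvw
  ext k
  have hneg : ∀ (f : Oct) (k : Fin 8), (-f) k = -(f k) := fun _ _ => rfl
  fin_cases k
  · show -(octMul (octMul (octConj w) v) (octConj u) 0) = octMul (octMul (octConj u) v) (octConj w) 0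
    simp only [octMul_apply0, octMul_apply1, octMul_apply2, octMul_apply3, octMul_apply4,
      octMul_apply5, octMul_apply6, octMul_apply7, octConj_apply]
    simp (config := { decide := true }) only [if_true, if_false, ite_true, ite_false]
    linear_combination 2 * v 0 * huw - 2 * w 0 * huv - 2 * u 0 * hvw
  · show -(octMul (octMul (octConj w) v) (octConj u) 1) = octMul (octMul (octConj u) v) (octConj w) 1
    simp only [octMul_apply0, octMul_apply1, octMul_apply2, octMul_apply3, octMul_apply4,
      octMul_apply5, octMul_apply6, octMul_apply7, octConj_apply]
    simp (config := { decide := true }) only [if_true, if_false, ite_true, ite_false]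
    linear_combination (-2 * v 1) * huw + 2 * w 1 * huv + 2 * u 1 * hvw
  · show -(octMul (octMul (octConj w) v) (octConj u) 2) = octMul (octMul (octConj u) v) (octConj w) 2
    simp only [octMul_apply0, octMul_apply1, octMul_apply2, octMul_apply3, octMul_apply4,
      octMul_apply5, octMul_apply6, octMul_apply7, octConj_apply]
    simp (config := { decide := true }) only [if_true, if_false, ite_true, ite_false]
    linear_combination (-2 * v 2) * huw + 2 * w 2 * huv + 2 * u 2 * hvw
  · show -(octMul (octMul (octConj w) v) (octConj u) 3) = octMul (octMul (octConj u) v) (octConj w) 3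
    simp only [octMul_apply0, octMul_apply1, octMul_apply2, octMul_apply3, octMul_apply4,
      octMul_apply5, octMul_apply6, octMul_apply7, octConj_apply]
    simp (config := { decide := true }) only [if_true, if_false, ite_true, ite_false]
    linear_combination (-2 * v 3) * huw + 2 * w 3 * huv + 2 * u 3 * hvw
  · show -(octMul (octMul (octConj w) v) (octConj u) 4) = octMul (octMul (octConj u) v) (octConj w) 4
    simp only [octMul_apply0, octMul_apply1, octMul_apply2, octMul_apply3, octMul_apply4,
      octMul_apply5, octMul_apply6, octMul_apply7, octConj_apply]
    simp (config := { decide := true }) only [if_true, if_false, ite_true, ite_false]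
    linear_combination (-2 * v 4) * huw + 2 * w 4 * huv + 2 * u 4 * hvw
  · show -(octMul (octMul (octConj w) v) (octConj u) 5) = octMul (octMul (octConj u) v) (octConj w) 5
    simp only [octMul_apply0, octMul_apply1, octMul_apply2, octMul_apply3, octMul_apply4,
      octMul_apply5, octMul_apply6, octMul_apply7, octConj_apply]
    simp (config := { decide := true }) only [if_true, if_false, ite_true, ite_false]
    linear_combination (-2 * v 5) * huw + 2 * w 5 * huv + 2 * u 5 * hvw
  · show -(octMul (octMul (octConj w) v) (octConj u) 6) = octMul (octMul (octConj u) v) (octConj w) 6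
    simp only [octMul_apply0, octMul_apply1, octMul_apply2, octMul_apply3, octMul_apply4,
      octMul_apply5, octMul_apply6, octMul_apply7, octConj_apply]
    simp (config := { decide := true }) only [if_true, if_false, ite_true, ite_false]
    linear_combination (-2 * v 6) * huw + 2 * w 6 * huv + 2 * u 6 * hvw
  · show -(octMul (octMul (octConj w) v) (octConj u) 7) = octMul (octMul (octConj u) v) (octConj w) 7
    simp only [octMul_apply0, octMul_apply1, octMul_apply2, octMul_apply3, octMul_apply4,
      octMul_apply5, octMul_apply6, octMul_apply7, octConj_apply]
    simp (config := { decide := true }) only [if_true, if_false, ite_true, ite_false]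
    linear_combination (-2 * v 7) * huw + 2 * w 7 * huv + 2 * u 7 * hvw
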